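/- Let H be a bipartite graph with bipartition (A,B), and let e = (u,v) with u ∈ A, v ∈ B be a non-edge of H. Then for every q ≥ 2, ch(H+e, q)/ch(H, q) ≥ (q-1)/q, where ch(G,q) is the number of proper q-colorings of G. -/

import Mathlib

open SimpleGraph

/-- Number of proper colorings of a graph with q colors. -/
noncomputable def chrom {V : Type*} (H : SimpleGraph V) (q : ℕ) : ℕ :=
  Nat.card {c : V → Fin q // ∀ a b, H.Adj a b → c a ≠ c b}

attribute [local instance] Classical.propDecidable

section Kempe

variable {V : Type*} (H : SimpleGraph V) {q : ℕ}

/-- The Kempe (i,j) subgraph. -/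
def kgraph (c : V → Fin q) (i j : Fin q) : SimpleGraph V where
  Adj x y := H.Adj x y ∧ (c x = i ∨ c x = j) ∧ (c y = i ∨ c y = j)
  symm := by constructor; intro x y ⟨h1, h2, h3⟩; exact ⟨h1.symm, h3, h2⟩
  loopless := by constructor; intro x ⟨h1, _⟩; exact H.irrefl h1

/-- Kempe swap of colors i,j on the component of u. -/
noncomputable def kswap (c : V → Fin q) (i j : Fin q) (u : V) : V → Fin q := fun x =>
  if (kgraph H c i j).Reachable u x then Equiv.swap i j (c x) else c x

lemma swap_mem_iff (i j z : Fin q) :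
    (Equiv.swap i j z = i ∨ Equiv.swap i j z = j) ↔ (z = i ∨ z = j) := by
  constructor
  · rintro (h | h)
    · right; have := congrArg (Equiv.swap i j) h
      rwa [Equiv.swap_apply_self, Equiv.swap_apply_left] at this
    · left; have := congrArg (Equiv.swap i j) h
      rwa [Equiv.swap_apply_self, Equiv.swap_apply_right] at this
  · rintro (rfl | rfl)
    · right; exact Equiv.swap_apply_left _ _
    · left; exact Equiv.swap_apply_right _ _

lemma kswap_mem_iff (c : V → Fin q) (i j : Fin q) (u x : V) :
    (kswap H c i j u x = i ∨ kswap H c i j u x = j) ↔ (c x = i ∨ c x = j) := by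
  unfold kswap
  split
  · exact swap_mem_iff i j (c x)
  · exact Iff.rfl

lemma kgraph_kswap (c : V → Fin q) (i j : Fin q) (u : V) :
    kgraph H (kswap H c i j u) i j = kgraph H c i j := by
  ext x y
  show H.Adj x y ∧ _ ∧ _ ↔ H.Adj x y ∧ _ ∧ _
  rw [kswap_mem_iff, kswap_mem_iff]

lemma kswap_kswap (c : V → Fin q) (i j : Fin q) (u : V) :
    kswap H (kswap H c i j u) i j u = c := by
  funext x
  conv_lhs => rw [kswap, kgraph_kswap]
  rw [kswap]
  split
  · rw [Equiv.swap_apply_self]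
  · rfl

lemma kswap_proper (c : V → Fin q) (i j : Fin q) (u : V)
    (hc : ∀ a b, H.Adj a b → c a ≠ c b) :
    ∀ a b, H.Adj a b → kswap H c i j u a ≠ kswap H c i j u b := by
  have key : ∀ a b, H.Adj a b → (kgraph H c i j).Reachable u a →
      ¬ (kgraph H c i j).Reachable u b → Equiv.swap i j (c a) ≠ c b := by
    intro a b hab ra rb h
    by_cases ha : c a = i ∨ c a = j
    · have hb : c b = i ∨ c b = j := by
        rw [← h]; exact (swap_mem_iff i j (c a)).mpr ha
      exact rb (ra.trans (Adj.reachable ⟨hab, ha, hb⟩))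
    · push_neg at ha
      rw [Equiv.swap_apply_of_ne_of_ne ha.1 ha.2] at h
      exact hc a b hab h
  intro a b hab
  unfold kswap
  by_cases ra : (kgraph H c i j).Reachable u a <;>
    by_cases rb : (kgraph H c i j).Reachable u b <;>
      simp only [ra, rb, if_true, if_false]
  · exact fun h => hc a b hab ((Equiv.swap i j).injective h)
  · exact key a b hab ra rb
  · exact fun h => key b a hab.symm rb ra h.symm
  · exact hc a b hab

lemma reach_ind {G : SimpleGraph V} {P : V → Prop}
    (h : ∀ a b, G.Adj a b → P a → P b) :
    ∀ {x y}, G.Reachable x y → P x → P y := by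
  intro x y hr
  obtain ⟨w⟩ := hr
  induction w with
  | nil => exact id
  | cons h' p ih => exact fun hx => ih (h _ _ h' hx)

end Kempe

section Main

variable {V : Type*} (H : SimpleGraph V) {q : ℕ}

lemma not_reach (A : Set V) (hbip : ∀ a b, H.Adj a b → (a ∈ A ↔ b ∉ A))
    (c : V → Fin q) (hc : ∀ a b, H.Adj a b → c a ≠ c b) (i j : Fin q) (u v : V)
    (hu : u ∈ A) (hv : v ∉ A) (hcu : c u = i) (hcv : c v = i) (hij : j ≠ i) :
    ¬ (kgraph H c i j).Reachable u v := by
  intro hr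
  have step : ∀ a b, (kgraph H c i j).Adj a b →
      ((a ∈ A ∧ c a = i) ∨ (a ∉ A ∧ c a = j)) →
      ((b ∈ A ∧ c b = i) ∨ (b ∉ A ∧ c b = j)) := by
    rintro a b ⟨hab, ha, hb⟩ hPa
    have hiff := hbip a b hab
    have hne := hc a b hab
    rcases hPa with ⟨haA, hai⟩ | ⟨haA, haj⟩
    · right
      refine ⟨hiff.mp haA, ?_⟩
      rcases hb with h | h
      · exact absurd (hai ▸ h : c b = c a) (Ne.symm hne)
      · exact h
    · left
      have hbA : b ∈ A := by
        by_contra hbA; exact haA (hiff.mpr hbA)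
      refine ⟨hbA, ?_⟩
      rcases hb with h | h
      · exact h
      · exact absurd (haj ▸ h : c b = c a) (Ne.symm hne)
  have := reach_ind step hr (Or.inl ⟨hu, hcu⟩)
  rcases this with ⟨h1, _⟩ | ⟨_, h2⟩
  · exact hv h1
  · rw [h2] at hcv; exact hij hcv

end Main

lemma chrom_arith (q G B : ℕ) (hq : 2 ≤ q) (hpos : 0 < G + B)
    (hinj : B * (q - 1) ≤ G) :
    ((G : ℕ) : ℝ) / ((G + B : ℕ) : ℝ) ≥ ((q : ℝ) - 1) / q := by
  have hq0 : (0 : ℝ) < q := by positivity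
  have hGB : (0 : ℝ) < ((G + B : ℕ) : ℝ) := by exact_mod_cast hpos
  rw [ge_iff_le, div_le_div_iff₀ hq0 hGB]
  have hq1 : 1 ≤ q := by omega
  have hcast : (B : ℝ) * ((q : ℝ) - 1) ≤ G := by
    have h' : ((B * (q - 1) : ℕ) : ℝ) ≤ (G : ℝ) := by exact_mod_cast hinj
    rwa [Nat.cast_mul, Nat.cast_sub hq1, Nat.cast_one] at h'
  push_cast
  nlinarith [hcast, Nat.cast_nonneg (α := ℝ) G]

theorem stmt_11 {V : Type*} [Fintype V] (H : SimpleGraph V) (A : Set V)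
    (hbip : ∀ a b, H.Adj a b → (a ∈ A ↔ b ∉ A)) (u v : V) (hu : u ∈ A) (hv : v ∉ A)
    (hne : ¬ H.Adj u v) (huv : u ≠ v) (q : ℕ) (hq : 2 ≤ q) :
    (chrom (H ⊔ SimpleGraph.fromEdgeSet {s(u, v)}) q : ℝ) / (chrom H q : ℝ) ≥
      ((q : ℝ) - 1) / q := by
  classical
  haveI : NeZero q := ⟨by omega⟩
  set P : (V → Fin q) → Prop := fun c => ∀ a b, H.Adj a b → c a ≠ c b with hP
  have h01 : (0 : Fin q) ≠ 1 := by
    intro h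
    have := congrArg Fin.val h
    rw [Fin.val_zero, Fin.val_one'] at this
    rw [Nat.mod_eq_of_lt (by omega)] at this
    exact absurd this (by omega)
  -- chrom of H + e
  have hG : chrom (H ⊔ SimpleGraph.fromEdgeSet {s(u, v)}) q
      = Nat.card {c : V → Fin q // P c ∧ c u ≠ c v} := by
    unfold chrom
    apply Nat.card_congr
    apply Equiv.subtypeEquivRight
    intro c
    constructor
    · intro h
      refine ⟨fun a b hab => h a b (Or.inl hab), h u v (Or.inr ?_)⟩
      exact ⟨rfl, huv⟩
    · rintro ⟨h1, h2⟩ a b hab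
      rcases hab with hab | hab
      · exact h1 a b hab
      · rw [fromEdgeSet_adj, Set.mem_singleton_iff, Sym2.eq_iff] at hab
        rcases hab with ⟨⟨rfl, rfl⟩ | ⟨rfl, rfl⟩, -⟩
        · exact h2
        · exact h2.symm
  -- split chrom H
  have hsplit : chrom H q = Nat.card {c : V → Fin q // P c ∧ c u ≠ c v}
      + Nat.card {c : V → Fin q // P c ∧ c u = c v} := by
    unfold chrom
    rw [← Nat.card_sum]
    apply Nat.card_congr
    refine
      { toFun := fun c => if h : c.1 u ≠ c.1 v then Sum.inl ⟨c.1, c.2, h⟩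
          else Sum.inr ⟨c.1, c.2, not_not.mp h⟩
        invFun := Sum.elim (fun c => ⟨c.1, c.2.1⟩) (fun c => ⟨c.1, c.2.1⟩)
        left_inv := ?_
        right_inv := ?_ }
    · intro c
      by_cases h : c.1 u ≠ c.1 v <;> simp [h]
    · rintro (c | c)
      · simp [c.2.2]
      · simp [c.2.2]
  -- positivity
  have hpos : 0 < chrom H q := by
    unfold chrom
    have hne : Nonempty {c : V → Fin q // ∀ a b, H.Adj a b → c a ≠ c b} := by
      refine ⟨⟨fun x => if x ∈ A then 0 else 1, ?_⟩⟩
      intro a b hab h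
      have hiff := hbip a b hab
      by_cases ha : a ∈ A
      · have hb : b ∉ A := hiff.mp ha
        simp only [if_pos ha, if_neg hb] at h
        exact h01 h
      · have hb : b ∈ A := by
          by_contra hb; exact ha (hiff.mpr hb)
        simp only [if_neg ha, if_pos hb] at h
        exact h01 h.symm
    exact Nat.card_pos
  -- the injection
  have hinj : Nat.card {c : V → Fin q // P c ∧ c u = c v} * (q - 1)
      ≤ Nat.card {c : V → Fin q // P c ∧ c u ≠ c v} := by
    have hcard : Nat.card ({c : V → Fin q // P c ∧ c u = c v} × {k : Fin q // k ≠ 0})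
        = Nat.card {c : V → Fin q // P c ∧ c u = c v} * (q - 1) := by
      rw [Nat.card_prod]
      congr 1
      rw [Nat.card_eq_fintype_card, Fintype.card_subtype_compl, Fintype.card_fin,
        Fintype.card_subtype_eq]
    rw [← hcard]
    have hfacts : ∀ (c : V → Fin q), P c → c u = c v → ∀ (k : Fin q), k ≠ 0 →
        (∀ a b, H.Adj a b →
          kswap H c (c u) (Equiv.swap 0 (c u) k) u a
          ≠ kswap H c (c u) (Equiv.swap 0 (c u) k) u b)
        ∧ kswap H c (c u) (Equiv.swap 0 (c u) k) u u = Equiv.swap 0 (c u) k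
        ∧ kswap H c (c u) (Equiv.swap 0 (c u) k) u v = c u := by
      intro c hc hcuv k hk
      set i := c u with hi
      set j := Equiv.swap 0 i k with hj
      have hji : j ≠ i := by
        intro h
        apply hk
        have := congrArg (Equiv.swap 0 i) h
        rwa [Equiv.swap_apply_self, Equiv.swap_apply_right] at this
      have hnr : ¬ (kgraph H c i j).Reachable u v :=
        not_reach H A hbip c hc i j u v hu hv rfl hcuv.symm hji
      refine ⟨kswap_proper H c i j u hc, ?_, ?_⟩
      · rw [kswap, if_pos (Reachable.refl u), Equiv.swap_apply_left]
      · rw [kswap, if_neg hnr]; exact hcuv.symm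
    apply Nat.card_le_card_of_injective
      (fun p => ⟨kswap H p.1.1 (p.1.1 u) (Equiv.swap 0 (p.1.1 u) p.2.1) u,
        (hfacts p.1.1 p.1.2.1 p.1.2.2 p.2.1 p.2.2).1, by
          rw [(hfacts p.1.1 p.1.2.1 p.1.2.2 p.2.1 p.2.2).2.1,
            (hfacts p.1.1 p.1.2.1 p.1.2.2 p.2.1 p.2.2).2.2]
          intro h
          apply p.2.2
          have := congrArg (Equiv.swap 0 (p.1.1 u)) h
          rwa [Equiv.swap_apply_self, Equiv.swap_apply_right] at this⟩)
    rintro ⟨⟨c₁, hc₁, hcuv₁⟩, ⟨k₁, hk₁⟩⟩ ⟨⟨c₂, hc₂, hcuv₂⟩, ⟨k₂, hk₂⟩⟩ heq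
    have heq' : kswap H c₁ (c₁ u) (Equiv.swap 0 (c₁ u) k₁) u
        = kswap H c₂ (c₂ u) (Equiv.swap 0 (c₂ u) k₂) u := congrArg Subtype.val heq
    obtain ⟨-, hu₁, hv₁⟩ := hfacts c₁ hc₁ hcuv₁ k₁ hk₁
    obtain ⟨-, hu₂, hv₂⟩ := hfacts c₂ hc₂ hcuv₂ k₂ hk₂
    have hii : c₁ u = c₂ u := by
      rw [← hv₁, ← hv₂, heq']
    have hjj : Equiv.swap 0 (c₁ u) k₁ = Equiv.swap 0 (c₂ u) k₂ := by
      rw [← hu₁, ← hu₂, heq']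
    have hkk : k₁ = k₂ := by
      have := congrArg (Equiv.swap 0 (c₁ u)) hjj
      rwa [Equiv.swap_apply_self, hii, Equiv.swap_apply_self] at this
    have hcc : c₁ = c₂ := by
      have h1 := kswap_kswap H c₁ (c₁ u) (Equiv.swap 0 (c₁ u) k₁) u
      have h2 := kswap_kswap H c₂ (c₂ u) (Equiv.swap 0 (c₂ u) k₂) u
      rw [← h1, heq', hjj, hii]
      exact h2
    subst hcc hkk
    rfl
  -- final arithmetic
  rw [hG, hsplit]
  rw [hsplit] at hpos
  exact chrom_arith q (Nat.card {c : V → Fin q // P c ∧ c u ≠ c v})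
    (Nat.card {c : V → Fin q // P c ∧ c u = c v}) hq hpos hinj
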